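/- Let d₁(τ,x) = (x + (r + σ²/2)τ)/(σ√τ) with σ > 0, r ≥ 0, τ > 0, and N the standard normal CDF. For p ≥ 1 and K > 0, the function v(τ,x) = K e^{rτ + x}(N(d₁(τ,x)) − 1) satisfies ∫_ℝ |v(τ,x)|^p dx ≤ (1/p) K^p e^{p(p−1)τσ²/2}. In particular ‖v(τ,·)‖_{L^p} ≤ p^{-1/p} K e^{(p−1)Tσ²/2} for all 0 < τ ≤ T. -/

import Mathlib

open MeasureTheory Real

/-- Standard normal cumulative distribution function. -/
noncomputable def stdNormalCDF (d : ℝ) : ℝ :=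
  ∫ ξ in Set.Iio d, Real.exp (-ξ ^ 2 / 2) / Real.sqrt (2 * Real.pi)

/-- Black–Scholes argument `d₁(τ,x) = (x + (r + σ²/2)τ)/(σ√τ)`. -/
noncomputable def dOne (σ r τ x : ℝ) : ℝ :=
  (x + (r + σ ^ 2 / 2) * τ) / (σ * Real.sqrt τ)

open Set Filter


noncomputable def gpdf (t : ℝ) : ℝ := Real.exp (-t ^ 2 / 2) / Real.sqrt (2 * Real.pi)

lemma gpdf_nonneg (t : ℝ) : 0 ≤ gpdf t := div_nonneg (exp_nonneg _) (Real.sqrt_nonneg _)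

lemma continuous_gpdf : Continuous gpdf := by
  unfold gpdf; fun_prop

lemma exp_mul_gpdf_eq (b t : ℝ) :
    Real.exp (b * t) * gpdf t
      = (Real.sqrt (2 * Real.pi))⁻¹ * Real.exp (b ^ 2 / 2) * Real.exp (-(1/2) * (t - b) ^ 2) := by
  unfold gpdf
  rw [div_eq_inv_mul, ← mul_assoc, mul_comm (Real.exp (b*t)), mul_assoc, ← Real.exp_add,
    mul_assoc, ← Real.exp_add]
  ring_nf

lemma integrable_exp_mul_gpdf (b : ℝ) : Integrable (fun t => Real.exp (b * t) * gpdf t) := by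
  have h : Integrable (fun t : ℝ => Real.exp (-(1/2) * (t - b) ^ 2)) :=
    (integrable_exp_neg_mul_sq (by norm_num : (0:ℝ) < 1/2)).comp_sub_right b
  refine (h.const_mul ((Real.sqrt (2 * Real.pi))⁻¹ * Real.exp (b ^ 2 / 2))).congr ?_
  filter_upwards with t
  rw [exp_mul_gpdf_eq, mul_assoc]

lemma integral_exp_mul_gpdf (b : ℝ) :
    ∫ t : ℝ, Real.exp (b * t) * gpdf t = Real.exp (b ^ 2 / 2) := by
  simp_rw [exp_mul_gpdf_eq, mul_assoc]
  rw [MeasureTheory.integral_const_mul, MeasureTheory.integral_const_mul]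
  have h1 : ∫ t : ℝ, Real.exp (-(1/2) * (t - b) ^ 2)
      = ∫ t : ℝ, Real.exp (-(1/2) * t ^ 2) :=
    integral_sub_right_eq_self (fun t : ℝ => Real.exp (-(1/2) * t ^ 2)) b
  rw [h1, integral_gaussian]
  have : Real.sqrt (Real.pi / (1/2)) = Real.sqrt (2 * Real.pi) := by norm_num; ring_nf
  rw [this]
  field_simp

lemma integrable_gpdf : Integrable gpdf := by
  have := integrable_exp_mul_gpdf 0
  simpa using this

lemma integral_gpdf : ∫ t : ℝ, gpdf t = 1 := by
  have := integral_exp_mul_gpdf 0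
  simpa using this

lemma stdNormalCDF_eq (d : ℝ) : stdNormalCDF d = ∫ t in Set.Iio d, gpdf t := rfl

lemma one_sub_stdNormalCDF (d : ℝ) :
    1 - stdNormalCDF d = ∫ t in Set.Ici d, gpdf t := by
  have h := intervalIntegral.integral_Iio_add_Ici (μ := volume) (b := d)
    integrable_gpdf.integrableOn integrable_gpdf.integrableOn
  rw [stdNormalCDF_eq]
  rw [integral_gpdf] at h
  linarith

lemma stdNormalCDF_nonneg (d : ℝ) : 0 ≤ stdNormalCDF d := by
  rw [stdNormalCDF_eq]
  exact setIntegral_nonneg measurableSet_Iio fun t _ => gpdf_nonneg t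

lemma stdNormalCDF_le_one (d : ℝ) : stdNormalCDF d ≤ 1 := by
  rw [stdNormalCDF_eq, ← integral_gpdf]
  exact setIntegral_le_integral integrable_gpdf (Filter.Eventually.of_forall gpdf_nonneg)

lemma tail_le (d b : ℝ) (hb : 0 ≤ b) :
    1 - stdNormalCDF d ≤ Real.exp (b ^ 2 / 2 - b * d) := by
  rw [one_sub_stdNormalCDF]
  calc ∫ t in Set.Ici d, gpdf t
      ≤ ∫ t in Set.Ici d, Real.exp (-(b*d)) * (Real.exp (b*t) * gpdf t) := by
        refine setIntegral_mono_on integrable_gpdf.integrableOn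
          (((integrable_exp_mul_gpdf b).const_mul _).integrableOn) measurableSet_Ici ?_
        intro t ht
        rw [← mul_assoc, ← Real.exp_add]
        have h1 : (1:ℝ) ≤ Real.exp (-(b*d) + b*t) := by
          rw [← Real.exp_zero]
          apply Real.exp_le_exp.mpr
          have := Set.mem_Ici.mp ht
          nlinarith
        nlinarith [gpdf_nonneg t]
    _ = Real.exp (-(b*d)) * ∫ t in Set.Ici d, Real.exp (b*t) * gpdf t := by
        rw [MeasureTheory.integral_const_mul]
    _ ≤ Real.exp (-(b*d)) * ∫ t : ℝ, Real.exp (b*t) * gpdf t := by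
        refine mul_le_mul_of_nonneg_left ?_ (Real.exp_nonneg _)
        exact setIntegral_le_integral (integrable_exp_mul_gpdf b)
          (Filter.Eventually.of_forall fun t => mul_nonneg (Real.exp_nonneg _) (gpdf_nonneg t))
    _ = Real.exp (b ^ 2 / 2 - b * d) := by
        rw [integral_exp_mul_gpdf, ← Real.exp_add]; ring_nf

lemma hasDerivAt_stdNormalCDF (d : ℝ) : HasDerivAt stdNormalCDF (gpdf d) d := by
  have heq : ∀ x : ℝ, stdNormalCDF x = stdNormalCDF 0 + ∫ t in (0:ℝ)..x, gpdf t := by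
    intro x
    rw [stdNormalCDF_eq, stdNormalCDF_eq]
    rw [← MeasureTheory.integral_Iic_eq_integral_Iio, ← MeasureTheory.integral_Iic_eq_integral_Iio]
    rw [← intervalIntegral.integral_Iic_sub_Iic integrable_gpdf.integrableOn
      integrable_gpdf.integrableOn]
    ring
  have h : HasDerivAt (fun x => stdNormalCDF 0 + ∫ t in (0:ℝ)..x, gpdf t) (gpdf d) d := by
    refine HasDerivAt.const_add _ ?_
    exact intervalIntegral.integral_hasDerivAt_right
      integrable_gpdf.intervalIntegrable
      continuous_gpdf.aestronglyMeasurable.stronglyMeasurableAtFilter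
      continuous_gpdf.continuousAt
  exact h.congr_of_eventuallyEq (Filter.Eventually.of_forall heq)

lemma continuous_stdNormalCDF : Continuous stdNormalCDF :=
  continuous_iff_continuousAt.mpr fun d => (hasDerivAt_stdNormalCDF d).continuousAt

lemma one_sub_cdf_nonneg (d : ℝ) : 0 ≤ 1 - stdNormalCDF d := by
  linarith [stdNormalCDF_le_one d]

lemma one_sub_cdf_le_one (d : ℝ) : 1 - stdNormalCDF d ≤ 1 := by
  linarith [stdNormalCDF_nonneg d]

lemma key (a : ℝ) (ha : 0 < a) :
    Integrable (fun ξ => Real.exp (a * ξ) * (1 - stdNormalCDF ξ)) ∧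
    ∫ ξ : ℝ, Real.exp (a * ξ) * (1 - stdNormalCDF ξ) = Real.exp (a ^ 2 / 2) / a := by
  set g : ℝ → ℝ := fun ξ => Real.exp (a * ξ) * (1 - stdNormalCDF ξ) with hg
  have hgcont : Continuous g := by
    apply Continuous.mul
    · fun_prop
    · exact continuous_const.sub continuous_stdNormalCDF
  have hgnonneg : ∀ ξ, 0 ≤ g ξ := fun ξ =>
    mul_nonneg (Real.exp_nonneg _) (one_sub_cdf_nonneg ξ)
  have hub : ∀ ξ, g ξ ≤ Real.exp (2 * a ^ 2) * Real.exp (-a * ξ) := by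
    intro ξ
    have h1 : 1 - stdNormalCDF ξ ≤ Real.exp ((2*a) ^ 2 / 2 - (2*a) * ξ) :=
      tail_le ξ (2*a) (by linarith)
    calc g ξ ≤ Real.exp (a * ξ) * Real.exp ((2*a) ^ 2 / 2 - (2*a) * ξ) := by
          exact mul_le_mul_of_nonneg_left h1 (Real.exp_nonneg _)
      _ = Real.exp (2 * a ^ 2) * Real.exp (-a * ξ) := by
          rw [← Real.exp_add, ← Real.exp_add]; ring_nf
  have hub2 : ∀ ξ, g ξ ≤ Real.exp (a * ξ) := fun ξ => by
    simpa [hg] using mul_le_of_le_one_right (Real.exp_nonneg (a*ξ)) (one_sub_cdf_le_one ξ)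
  -- integrability of g
  have hIoi : IntegrableOn g (Set.Ioi 0) := by
    refine Integrable.mono ((exp_neg_integrableOn_Ioi 0 ha).const_mul (Real.exp (2*a^2)))
      hgcont.aestronglyMeasurable.restrict ?_
    filter_upwards with ξ
    rw [Real.norm_eq_abs, Real.norm_eq_abs, abs_of_nonneg (hgnonneg ξ),
      abs_of_nonneg (by positivity)]
    exact hub ξ
  have hexpIic : IntegrableOn (fun ξ : ℝ => Real.exp (a * ξ)) (Set.Iic 0) := by
    have h1 : IntegrableOn (fun x : ℝ => Real.exp (-a * x)) (Set.Ioi (0:ℝ)) :=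
      exp_neg_integrableOn_Ioi 0 ha
    have h2 := (MeasurePreserving.integrableOn_comp_preimage
      (Measure.measurePreserving_neg (volume : Measure ℝ))
      (Homeomorph.neg ℝ).measurableEmbedding).2 h1
    have h3 : (Neg.neg ⁻¹' Set.Ioi (0:ℝ)) = Set.Iio 0 := by
      ext x; simp
    rw [h3] at h2
    have h4 : IntegrableOn (fun x : ℝ => Real.exp (a * x)) (Set.Iio 0) := by
      refine h2.congr_fun (fun x _ => ?_) measurableSet_Iio
      simp [Function.comp]
    rwa [integrableOn_Iic_iff_integrableOn_Iio]
  have hIic : IntegrableOn g (Set.Iic 0) := by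
    refine Integrable.mono hexpIic hgcont.aestronglyMeasurable.restrict ?_
    filter_upwards with ξ
    rw [Real.norm_eq_abs, Real.norm_eq_abs, abs_of_nonneg (hgnonneg ξ),
      abs_of_nonneg (Real.exp_nonneg _)]
    exact hub2 ξ
  have hgint : Integrable g := by
    rw [← integrableOn_univ, ← Set.Iic_union_Ioi (a := (0:ℝ))]
    exact hIic.union hIoi
  refine ⟨hgint, ?_⟩
  set F : ℝ → ℝ := fun ξ => Real.exp (a * ξ) / a * (1 - stdNormalCDF ξ) with hF
  have hderiv : ∀ ξ : ℝ, HasDerivAt F (g ξ - Real.exp (a * ξ) / a * gpdf ξ) ξ := by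
    intro ξ
    have h1 : HasDerivAt (fun ξ : ℝ => Real.exp (a * ξ) / a) (Real.exp (a * ξ)) ξ := by
      have h2 := (((hasDerivAt_id ξ).const_mul a).exp).div_const a
      refine h2.congr_deriv ?_
      simp [ha.ne']
    have h2 : HasDerivAt (fun ξ => 1 - stdNormalCDF ξ) (-gpdf ξ) ξ :=
      (hasDerivAt_stdNormalCDF ξ).const_sub 1
    have h3 := h1.mul h2
    refine h3.congr_deriv ?_
    simp only [hg]; ring
  have hint2 : Integrable (fun ξ : ℝ => Real.exp (a * ξ) / a * gpdf ξ) := by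
    refine ((integrable_exp_mul_gpdf a).div_const a).congr ?_
    filter_upwards with ξ; ring
  have hf'int : Integrable (fun ξ : ℝ => g ξ - Real.exp (a * ξ) / a * gpdf ξ) :=
    hgint.sub hint2
  have hFnonneg : ∀ ξ, 0 ≤ F ξ := fun ξ =>
    mul_nonneg (by positivity) (one_sub_cdf_nonneg ξ)
  have hbotF : Filter.Tendsto F Filter.atBot (nhds 0) := by
    have hB : ∀ ξ, F ξ ≤ Real.exp (a * ξ) / a := fun ξ =>
      mul_le_of_le_one_right (by positivity) (one_sub_cdf_le_one ξ)
    have h1 : Filter.Tendsto (fun ξ : ℝ => a * ξ) Filter.atBot Filter.atBot :=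
      Filter.Tendsto.const_mul_atBot ha tendsto_id
    have h2 : Filter.Tendsto (fun ξ : ℝ => Real.exp (a * ξ) / a) Filter.atBot (nhds 0) := by
      have := (Real.tendsto_exp_atBot.comp h1).div_const a
      simpa using this
    exact tendsto_of_tendsto_of_tendsto_of_le_of_le tendsto_const_nhds h2 hFnonneg hB
  have htopF : Filter.Tendsto F Filter.atTop (nhds 0) := by
    have hB2 : ∀ ξ, F ξ ≤ Real.exp (2 * a ^ 2) / a * Real.exp (-a * ξ) := by
      intro ξ
      calc F ξ ≤ Real.exp (a * ξ) / a * Real.exp ((2*a) ^ 2 / 2 - (2*a) * ξ) :=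
            mul_le_mul_of_nonneg_left (tail_le ξ (2*a) (by linarith)) (by positivity)
        _ = Real.exp (2 * a ^ 2) / a * Real.exp (-a * ξ) := by
            rw [div_mul_eq_mul_div, div_mul_eq_mul_div, ← Real.exp_add, ← Real.exp_add]
            ring_nf
    have h1 : Filter.Tendsto (fun ξ : ℝ => a * ξ) Filter.atTop Filter.atTop :=
      Filter.Tendsto.const_mul_atTop ha tendsto_id
    have h2 : Filter.Tendsto (fun ξ : ℝ => Real.exp (2 * a ^ 2) / a * Real.exp (-a * ξ))
        Filter.atTop (nhds 0) := by
      have h3 : Filter.Tendsto (fun ξ : ℝ => -a * ξ) Filter.atTop Filter.atBot := by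
        exact (Filter.tendsto_neg_atTop_atBot.comp h1).congr fun ξ => (neg_mul a ξ).symm
      have := (Real.tendsto_exp_atBot.comp h3).const_mul (Real.exp (2 * a ^ 2) / a)
      simpa using this
    exact tendsto_of_tendsto_of_tendsto_of_le_of_le tendsto_const_nhds h2 hFnonneg hB2
  have hIic' : ∫ ξ in Set.Iic (0:ℝ), (g ξ - Real.exp (a * ξ) / a * gpdf ξ) = F 0 - 0 :=
    integral_Iic_of_hasDerivAt_of_tendsto (hderiv 0).continuousAt.continuousWithinAt
      (fun x _ => hderiv x) hf'int.integrableOn hbotF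
  have hIoi' : ∫ ξ in Set.Ioi (0:ℝ), (g ξ - Real.exp (a * ξ) / a * gpdf ξ) = 0 - F 0 :=
    integral_Ioi_of_hasDerivAt_of_tendsto (hderiv 0).continuousAt.continuousWithinAt
      (fun x _ => hderiv x) hf'int.integrableOn htopF
  have hsum := intervalIntegral.integral_Iic_add_Ioi (μ := volume) (b := (0:ℝ))
    hf'int.integrableOn hf'int.integrableOn
  have hzero : ∫ ξ : ℝ, (g ξ - Real.exp (a * ξ) / a * gpdf ξ) = 0 := by
    rw [← hsum, hIic', hIoi']; ring
  rw [integral_sub hgint hint2] at hzero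
  have h2 : ∫ ξ : ℝ, Real.exp (a * ξ) / a * gpdf ξ = Real.exp (a ^ 2 / 2) / a := by
    simp only [div_mul_eq_mul_div]
    rw [MeasureTheory.integral_div, integral_exp_mul_gpdf]
  rw [h2] at hzero
  linarith

lemma rpow_le_self_of_le_one {b p : ℝ} (hb0 : 0 ≤ b) (hb1 : b ≤ 1) (hp : 1 ≤ p) :
    b ^ p ≤ b := by
  rcases eq_or_lt_of_le hb0 with h | h
  · rw [← h, Real.zero_rpow (by linarith : p ≠ 0)]
  · calc b ^ p ≤ b ^ (1:ℝ) := Real.rpow_le_rpow_of_exponent_ge h hb1 hp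
      _ = b := Real.rpow_one b


/-- `v(τ,x) = K e^{rτ+x}(N(d₁(τ,x)) − 1)` satisfies
`∫ |v(τ,x)|^p dx ≤ (1/p) K^p e^{p(p−1)τσ²/2}`, and in particular
`‖v(τ,·)‖_{L^p} ≤ p^{-1/p} K e^{(p−1)Tσ²/2}` for `0 < τ ≤ T`. -/
theorem bs_call_derivative_Lp_bound
    (σ r K p T : ℝ) (hσ : 0 < σ) (hr : 0 ≤ r) (hK : 0 < K)
    (hp : 1 ≤ p) (hT : 0 < T) :
    ∀ τ : ℝ, 0 < τ → τ ≤ T →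
      (∫ x : ℝ, |K * Real.exp (r * τ + x) * (stdNormalCDF (dOne σ r τ x) - 1)| ^ p) ≤
        (1 / p) * K ^ p * Real.exp (p * (p - 1) * τ * σ ^ 2 / 2) ∧
      (∫ x : ℝ, |K * Real.exp (r * τ + x) * (stdNormalCDF (dOne σ r τ x) - 1)| ^ p) ^ (1 / p) ≤
        p ^ (-(1 / p)) * K * Real.exp ((p - 1) * T * σ ^ 2 / 2) := by
  intro τ hτ hτT
  have hp0 : 0 < p := lt_of_lt_of_le one_pos hp
  set s : ℝ := σ * Real.sqrt τ with hs
  have hs0 : 0 < s := mul_pos hσ (Real.sqrt_pos.mpr hτ)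
  set a : ℝ := p * s with ha'
  have ha : 0 < a := mul_pos hp0 hs0
  set c : ℝ := (r + σ ^ 2 / 2) * τ with hc
  obtain ⟨hint, hval⟩ := key a ha
  have hd1 : ∀ x : ℝ, dOne σ r τ x = (x + c) / s := fun x => rfl
  set g : ℝ → ℝ := fun x => K ^ p * Real.exp (p * (r * τ)) *
    (Real.exp (-(p * c)) * (Real.exp (a * ((x + c) / s)) *
      (1 - stdNormalCDF ((x + c) / s)))) with hgdef
  have harg : ∀ x : ℝ, a * ((x + c) / s) = p * (x + c) := by
    intro x; rw [ha']; field_simp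
  -- pointwise bound
  have hpoint : ∀ x : ℝ,
      |K * Real.exp (r * τ + x) * (stdNormalCDF (dOne σ r τ x) - 1)| ^ p ≤ g x := by
    intro x
    set M : ℝ := 1 - stdNormalCDF ((x + c) / s) with hM
    have hM0 : 0 ≤ M := one_sub_cdf_nonneg _
    have hM1 : M ≤ 1 := one_sub_cdf_le_one _
    have habs : |K * Real.exp (r * τ + x) * (stdNormalCDF (dOne σ r τ x) - 1)|
        = K * Real.exp (r * τ + x) * M := by
      rw [hd1 x, abs_of_nonpos]
      · rw [hM]; ring
      · have h1 : stdNormalCDF ((x + c) / s) - 1 ≤ 0 := by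
          linarith [stdNormalCDF_le_one ((x + c) / s)]
        have h2 : 0 < K * Real.exp (r * τ + x) := by positivity
        nlinarith
    rw [habs]
    rw [Real.mul_rpow (by positivity) hM0,
      Real.mul_rpow hK.le (Real.exp_nonneg _)]
    calc K ^ p * Real.exp (r * τ + x) ^ p * M ^ p
        ≤ K ^ p * Real.exp (r * τ + x) ^ p * M := by
          have := _root_.rpow_le_self_of_le_one hM0 hM1 hp
          have h3 : (0:ℝ) ≤ K ^ p * Real.exp (r * τ + x) ^ p := by positivity
          nlinarith
      _ = g x := by
          simp only [hgdef]
          rw [harg x, ← hM]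
          have hE : Real.exp (p * (r * τ)) * (Real.exp (-(p * c)) * Real.exp (p * (x + c)))
              = Real.exp (r * τ + x) ^ p := by
            rw [← Real.exp_add, ← Real.exp_add,
              show p * (r * τ) + (-(p * c) + p * (x + c)) = (r * τ + x) * p from by ring,
              Real.exp_mul]
          rw [← hE]; ring
  -- integrability of g
  have hcomp : Integrable (fun x : ℝ => Real.exp (a * ((x + c) / s)) *
      (1 - stdNormalCDF ((x + c) / s))) := by
    have h1 : Integrable (fun y : ℝ => Real.exp (a * (y / s)) * (1 - stdNormalCDF (y / s))) := by
      have h2 := (MeasureTheory.integrable_comp_mul_left_iff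
        (fun ξ : ℝ => Real.exp (a * ξ) * (1 - stdNormalCDF ξ))
        (inv_ne_zero hs0.ne')).2 hint
      refine h2.congr ?_
      filter_upwards with y
      rw [div_eq_inv_mul]
    exact h1.comp_add_right c
  have hgint : Integrable g := (hcomp.const_mul _).const_mul _
  -- value of ∫ g
  have hI1 : ∫ x : ℝ, Real.exp (a * ((x + c) / s)) * (1 - stdNormalCDF ((x + c) / s))
      = s * (Real.exp (a ^ 2 / 2) / a) := by
    calc ∫ x : ℝ, Real.exp (a * ((x + c) / s)) * (1 - stdNormalCDF ((x + c) / s))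
        = ∫ y : ℝ, Real.exp (a * (y / s)) * (1 - stdNormalCDF (y / s)) :=
          integral_add_right_eq_self
            (fun y : ℝ => Real.exp (a * (y / s)) * (1 - stdNormalCDF (y / s))) c
      _ = |s| • ∫ ξ : ℝ, Real.exp (a * ξ) * (1 - stdNormalCDF ξ) :=
          MeasureTheory.Measure.integral_comp_div
            (fun ξ : ℝ => Real.exp (a * ξ) * (1 - stdNormalCDF ξ)) s
      _ = s * (Real.exp (a ^ 2 / 2) / a) := by
          rw [hval, abs_of_pos hs0, smul_eq_mul]
  have hs2 : s ^ 2 = σ ^ 2 * τ := by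
    rw [hs, mul_pow, Real.sq_sqrt hτ.le]
  have ha2 : a ^ 2 = p ^ 2 * (σ ^ 2 * τ) := by rw [ha', mul_pow, hs2]
  have h4 : p * (r * τ) + -(p * c) + a ^ 2 / 2 = p * (p - 1) * τ * σ ^ 2 / 2 := by
    rw [hc, ha2]; ring
  have hgval : ∫ x : ℝ, g x = (1 / p) * K ^ p * Real.exp (p * (p - 1) * τ * σ ^ 2 / 2) := by
    simp only [hgdef]
    rw [MeasureTheory.integral_const_mul, MeasureTheory.integral_const_mul, hI1]
    have h3 : s * (Real.exp (a ^ 2 / 2) / a) = Real.exp (a ^ 2 / 2) / p := by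
      rw [ha']; field_simp
    rw [h3]
    rw [show K ^ p * Real.exp (p * (r * τ)) * (Real.exp (-(p * c)) * (Real.exp (a ^ 2 / 2) / p))
        = (1 / p) * K ^ p * (Real.exp (p * (r * τ)) * Real.exp (-(p * c)) *
          Real.exp (a ^ 2 / 2)) from by ring]
    rw [← Real.exp_add, ← Real.exp_add, h4]
  have hfirst : (∫ x : ℝ, |K * Real.exp (r * τ + x) *
      (stdNormalCDF (dOne σ r τ x) - 1)| ^ p) ≤
      (1 / p) * K ^ p * Real.exp (p * (p - 1) * τ * σ ^ 2 / 2) := by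
    rw [← hgval]
    exact integral_mono_of_nonneg
      (Filter.Eventually.of_forall fun x => Real.rpow_nonneg (abs_nonneg _) p)
      hgint (Filter.Eventually.of_forall hpoint)
  refine ⟨hfirst, ?_⟩
  have hI0 : 0 ≤ ∫ x : ℝ, |K * Real.exp (r * τ + x) *
      (stdNormalCDF (dOne σ r τ x) - 1)| ^ p :=
    integral_nonneg fun x => Real.rpow_nonneg (abs_nonneg _) p
  have h6 := Real.rpow_le_rpow hI0 hfirst (by positivity : (0:ℝ) ≤ 1 / p)
  refine le_trans h6 ?_
  have hB : ((1 / p) * K ^ p * Real.exp (p * (p - 1) * τ * σ ^ 2 / 2)) ^ (1 / p)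
      = p ^ (-(1 / p)) * K * Real.exp ((p - 1) * τ * σ ^ 2 / 2) := by
    rw [Real.mul_rpow (by positivity) (Real.exp_nonneg _),
      Real.mul_rpow (by positivity) (Real.rpow_nonneg hK.le p)]
    congr 1
    · congr 1
      · rw [one_div, Real.inv_rpow hp0.le, ← Real.rpow_neg hp0.le]
      · rw [← Real.rpow_mul hK.le, mul_one_div_cancel hp0.ne', Real.rpow_one]
    · rw [← Real.exp_mul]
      congr 1
      field_simp
  rw [hB]
  have h7 : Real.exp ((p - 1) * τ * σ ^ 2 / 2) ≤ Real.exp ((p - 1) * T * σ ^ 2 / 2) := by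
    apply Real.exp_le_exp.mpr
    nlinarith [mul_nonneg (mul_nonneg (sub_nonneg.mpr hp) (sq_nonneg σ))
      (sub_nonneg.mpr hτT)]
  calc p ^ (-(1 / p)) * K * Real.exp ((p - 1) * τ * σ ^ 2 / 2)
      ≤ p ^ (-(1 / p)) * K * Real.exp ((p - 1) * T * σ ^ 2 / 2) := by
        refine mul_le_mul_of_nonneg_left h7 ?_
        positivity
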